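/- For x = (x¹,…,x⁸) ∈ ℝ⁸ let A(x) be the complex hermitian 3×3 matrix A(x) = [[x⁵ − √3·x⁴, √3·(x³ + i x⁸), √3·(x² + i x⁷)], [√3·(x³ − i x⁸), x⁵ + √3·x⁴, √3·(x¹ + i x⁶)], [√3·(x² − i x⁷), √3·(x¹ − i x⁶), −2x⁵]]. Then det A(x) is real for every x, and the totally symmetric tensor Υ_{IJK} (I,J,K = 1,…,8) defined by Υ_{IJK} x^I x^J x^K = (1/2)·det A(x) satisfies: (i) Υ_{IJK} = Υ_{(IJK)}; (ii) Σ_J Υ_{IJJ} = 0; (iii) Σ_I (Υ_{JKI}Υ_{LMI} + Υ_{LJI}Υ_{KMI} + Υ_{KLI}Υ_{JMI}) = δ_{JK}δ_{LM} + δ_{LJ}δ_{KM} + δ_{KL}δ_{JM}. -/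

import Mathlib

open Matrix

/-- The generic complex hermitian trace-free 3×3 matrix parametrized by `x ∈ ℝ⁸`
(indices: `x 0 = x¹, …, x 7 = x⁸`). -/
noncomputable def A8 (x : Fin 8 → ℝ) : Matrix (Fin 3) (Fin 3) ℂ :=
  !![(x 4 : ℂ) - Real.sqrt 3 * x 3,
     Real.sqrt 3 * ((x 2 : ℂ) + x 7 * Complex.I),
     Real.sqrt 3 * ((x 1 : ℂ) + x 6 * Complex.I);
     Real.sqrt 3 * ((x 2 : ℂ) - x 7 * Complex.I),
     (x 4 : ℂ) + Real.sqrt 3 * x 3,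
     Real.sqrt 3 * ((x 0 : ℂ) + x 5 * Complex.I);
     Real.sqrt 3 * ((x 1 : ℂ) - x 6 * Complex.I),
     Real.sqrt 3 * ((x 0 : ℂ) - x 5 * Complex.I),
     -2 * (x 4 : ℂ)]

set_option maxRecDepth 1000000
set_option maxHeartbeats 4000000

def naf : Fin 8 → Fin 8 → Fin 8 → ℤ :=
  ![ ![ ![ 0,0,0,0,-1,0,0,0 ],
     ![ 0,0,0,0,0,0,0,0 ],
     ![ 0,0,0,0,0,0,0,0 ],
     ![ 0,0,0,0,0,0,0,0 ],
     ![ -1,0,0,0,0,0,0,0 ],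
     ![ 0,0,0,0,0,0,0,0 ],
     ![ 0,0,0,0,0,0,0,0 ],
     ![ 0,0,0,0,0,0,0,0 ] ],
   ![ ![ 0,0,0,0,0,0,0,0 ],
     ![ 0,0,0,0,-1,0,0,0 ],
     ![ 0,0,0,0,0,0,0,0 ],
     ![ 0,0,0,0,0,0,0,0 ],
     ![ 0,-1,0,0,0,0,0,0 ],
     ![ 0,0,0,0,0,0,0,0 ],
     ![ 0,0,0,0,0,0,0,0 ],
     ![ 0,0,0,0,0,0,0,0 ] ],
   ![ ![ 0,0,0,0,0,0,0,0 ],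
     ![ 0,0,0,0,0,0,0,0 ],
     ![ 0,0,0,0,2,0,0,0 ],
     ![ 0,0,0,0,0,0,0,0 ],
     ![ 0,0,2,0,0,0,0,0 ],
     ![ 0,0,0,0,0,0,0,0 ],
     ![ 0,0,0,0,0,0,0,0 ],
     ![ 0,0,0,0,0,0,0,0 ] ],
   ![ ![ 0,0,0,0,0,0,0,0 ],
     ![ 0,0,0,0,0,0,0,0 ],
     ![ 0,0,0,0,0,0,0,0 ],
     ![ 0,0,0,0,2,0,0,0 ],
     ![ 0,0,0,2,0,0,0,0 ],
     ![ 0,0,0,0,0,0,0,0 ],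
     ![ 0,0,0,0,0,0,0,0 ],
     ![ 0,0,0,0,0,0,0,0 ] ],
   ![ ![ -1,0,0,0,0,0,0,0 ],
     ![ 0,-1,0,0,0,0,0,0 ],
     ![ 0,0,2,0,0,0,0,0 ],
     ![ 0,0,0,2,0,0,0,0 ],
     ![ 0,0,0,0,-2,0,0,0 ],
     ![ 0,0,0,0,0,-1,0,0 ],
     ![ 0,0,0,0,0,0,-1,0 ],
     ![ 0,0,0,0,0,0,0,2 ] ],
   ![ ![ 0,0,0,0,0,0,0,0 ],
     ![ 0,0,0,0,0,0,0,0 ],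
     ![ 0,0,0,0,0,0,0,0 ],
     ![ 0,0,0,0,0,0,0,0 ],
     ![ 0,0,0,0,0,-1,0,0 ],
     ![ 0,0,0,0,-1,0,0,0 ],
     ![ 0,0,0,0,0,0,0,0 ],
     ![ 0,0,0,0,0,0,0,0 ] ],
   ![ ![ 0,0,0,0,0,0,0,0 ],
     ![ 0,0,0,0,0,0,0,0 ],
     ![ 0,0,0,0,0,0,0,0 ],
     ![ 0,0,0,0,0,0,0,0 ],
     ![ 0,0,0,0,0,0,-1,0 ],
     ![ 0,0,0,0,0,0,0,0 ],
     ![ 0,0,0,0,-1,0,0,0 ],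
     ![ 0,0,0,0,0,0,0,0 ] ],
   ![ ![ 0,0,0,0,0,0,0,0 ],
     ![ 0,0,0,0,0,0,0,0 ],
     ![ 0,0,0,0,0,0,0,0 ],
     ![ 0,0,0,0,0,0,0,0 ],
     ![ 0,0,0,0,0,0,0,2 ],
     ![ 0,0,0,0,0,0,0,0 ],
     ![ 0,0,0,0,0,0,0,0 ],
     ![ 0,0,0,0,2,0,0,0 ] ] ]

def nbf : Fin 8 → Fin 8 → Fin 8 → ℤ :=
  ![ ![ ![ 0,0,0,1,0,0,0,0 ],
     ![ 0,0,1,0,0,0,0,0 ],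
     ![ 0,1,0,0,0,0,0,0 ],
     ![ 1,0,0,0,0,0,0,0 ],
     ![ 0,0,0,0,0,0,0,0 ],
     ![ 0,0,0,0,0,0,0,0 ],
     ![ 0,0,0,0,0,0,0,1 ],
     ![ 0,0,0,0,0,0,1,0 ] ],
   ![ ![ 0,0,1,0,0,0,0,0 ],
     ![ 0,0,0,-1,0,0,0,0 ],
     ![ 1,0,0,0,0,0,0,0 ],
     ![ 0,-1,0,0,0,0,0,0 ],
     ![ 0,0,0,0,0,0,0,0 ],
     ![ 0,0,0,0,0,0,0,-1 ],
     ![ 0,0,0,0,0,0,0,0 ],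
     ![ 0,0,0,0,0,-1,0,0 ] ],
   ![ ![ 0,1,0,0,0,0,0,0 ],
     ![ 1,0,0,0,0,0,0,0 ],
     ![ 0,0,0,0,0,0,0,0 ],
     ![ 0,0,0,0,0,0,0,0 ],
     ![ 0,0,0,0,0,0,0,0 ],
     ![ 0,0,0,0,0,0,1,0 ],
     ![ 0,0,0,0,0,1,0,0 ],
     ![ 0,0,0,0,0,0,0,0 ] ],
   ![ ![ 1,0,0,0,0,0,0,0 ],
     ![ 0,-1,0,0,0,0,0,0 ],
     ![ 0,0,0,0,0,0,0,0 ],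
     ![ 0,0,0,0,0,0,0,0 ],
     ![ 0,0,0,0,0,0,0,0 ],
     ![ 0,0,0,0,0,1,0,0 ],
     ![ 0,0,0,0,0,0,-1,0 ],
     ![ 0,0,0,0,0,0,0,0 ] ],
   ![ ![ 0,0,0,0,0,0,0,0 ],
     ![ 0,0,0,0,0,0,0,0 ],
     ![ 0,0,0,0,0,0,0,0 ],
     ![ 0,0,0,0,0,0,0,0 ],
     ![ 0,0,0,0,0,0,0,0 ],
     ![ 0,0,0,0,0,0,0,0 ],
     ![ 0,0,0,0,0,0,0,0 ],
     ![ 0,0,0,0,0,0,0,0 ] ],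
   ![ ![ 0,0,0,0,0,0,0,0 ],
     ![ 0,0,0,0,0,0,0,-1 ],
     ![ 0,0,0,0,0,0,1,0 ],
     ![ 0,0,0,0,0,1,0,0 ],
     ![ 0,0,0,0,0,0,0,0 ],
     ![ 0,0,0,1,0,0,0,0 ],
     ![ 0,0,1,0,0,0,0,0 ],
     ![ 0,-1,0,0,0,0,0,0 ] ],
   ![ ![ 0,0,0,0,0,0,0,1 ],
     ![ 0,0,0,0,0,0,0,0 ],
     ![ 0,0,0,0,0,1,0,0 ],
     ![ 0,0,0,0,0,0,-1,0 ],
     ![ 0,0,0,0,0,0,0,0 ],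
     ![ 0,0,1,0,0,0,0,0 ],
     ![ 0,0,0,-1,0,0,0,0 ],
     ![ 1,0,0,0,0,0,0,0 ] ],
   ![ ![ 0,0,0,0,0,0,1,0 ],
     ![ 0,0,0,0,0,-1,0,0 ],
     ![ 0,0,0,0,0,0,0,0 ],
     ![ 0,0,0,0,0,0,0,0 ],
     ![ 0,0,0,0,0,0,0,0 ],
     ![ 0,-1,0,0,0,0,0,0 ],
     ![ 1,0,0,0,0,0,0,0 ],
     ![ 0,0,0,0,0,0,0,0 ] ] ]

def Qa (J K L M : Fin 8) : ℤ :=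
  naf J K 0 * naf L M 0 + 3 * (nbf J K 0 * nbf L M 0)
  + naf L J 0 * naf K M 0 + 3 * (nbf L J 0 * nbf K M 0)
  + naf K L 0 * naf J M 0 + 3 * (nbf K L 0 * nbf J M 0)
  + naf J K 1 * naf L M 1 + 3 * (nbf J K 1 * nbf L M 1)
  + naf L J 1 * naf K M 1 + 3 * (nbf L J 1 * nbf K M 1)
  + naf K L 1 * naf J M 1 + 3 * (nbf K L 1 * nbf J M 1)
  + naf J K 2 * naf L M 2 + 3 * (nbf J K 2 * nbf L M 2)
  + naf L J 2 * naf K M 2 + 3 * (nbf L J 2 * nbf K M 2)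
  + naf K L 2 * naf J M 2 + 3 * (nbf K L 2 * nbf J M 2)
  + naf J K 3 * naf L M 3 + 3 * (nbf J K 3 * nbf L M 3)
  + naf L J 3 * naf K M 3 + 3 * (nbf L J 3 * nbf K M 3)
  + naf K L 3 * naf J M 3 + 3 * (nbf K L 3 * nbf J M 3)
  + naf J K 4 * naf L M 4 + 3 * (nbf J K 4 * nbf L M 4)
  + naf L J 4 * naf K M 4 + 3 * (nbf L J 4 * nbf K M 4)
  + naf K L 4 * naf J M 4 + 3 * (nbf K L 4 * nbf J M 4)
  + naf J K 5 * naf L M 5 + 3 * (nbf J K 5 * nbf L M 5)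
  + naf L J 5 * naf K M 5 + 3 * (nbf L J 5 * nbf K M 5)
  + naf K L 5 * naf J M 5 + 3 * (nbf K L 5 * nbf J M 5)
  + naf J K 6 * naf L M 6 + 3 * (nbf J K 6 * nbf L M 6)
  + naf L J 6 * naf K M 6 + 3 * (nbf L J 6 * nbf K M 6)
  + naf K L 6 * naf J M 6 + 3 * (nbf K L 6 * nbf J M 6)
  + naf J K 7 * naf L M 7 + 3 * (nbf J K 7 * nbf L M 7)
  + naf L J 7 * naf K M 7 + 3 * (nbf L J 7 * nbf K M 7)
  + naf K L 7 * naf J M 7 + 3 * (nbf K L 7 * nbf J M 7)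

def Qb (J K L M : Fin 8) : ℤ :=
  naf J K 0 * nbf L M 0 + nbf J K 0 * naf L M 0
  + naf L J 0 * nbf K M 0 + nbf L J 0 * naf K M 0
  + naf K L 0 * nbf J M 0 + nbf K L 0 * naf J M 0
  + naf J K 1 * nbf L M 1 + nbf J K 1 * naf L M 1
  + naf L J 1 * nbf K M 1 + nbf L J 1 * naf K M 1
  + naf K L 1 * nbf J M 1 + nbf K L 1 * naf J M 1
  + naf J K 2 * nbf L M 2 + nbf J K 2 * naf L M 2
  + naf L J 2 * nbf K M 2 + nbf L J 2 * naf K M 2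
  + naf K L 2 * nbf J M 2 + nbf K L 2 * naf J M 2
  + naf J K 3 * nbf L M 3 + nbf J K 3 * naf L M 3
  + naf L J 3 * nbf K M 3 + nbf L J 3 * naf K M 3
  + naf K L 3 * nbf J M 3 + nbf K L 3 * naf J M 3
  + naf J K 4 * nbf L M 4 + nbf J K 4 * naf L M 4
  + naf L J 4 * nbf K M 4 + nbf L J 4 * naf K M 4
  + naf K L 4 * nbf J M 4 + nbf K L 4 * naf J M 4
  + naf J K 5 * nbf L M 5 + nbf J K 5 * naf L M 5
  + naf L J 5 * nbf K M 5 + nbf L J 5 * naf K M 5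
  + naf K L 5 * nbf J M 5 + nbf K L 5 * naf J M 5
  + naf J K 6 * nbf L M 6 + nbf J K 6 * naf L M 6
  + naf L J 6 * nbf K M 6 + nbf L J 6 * naf K M 6
  + naf K L 6 * nbf J M 6 + nbf K L 6 * naf J M 6
  + naf J K 7 * nbf L M 7 + nbf J K 7 * naf L M 7
  + naf L J 7 * nbf K M 7 + nbf L J 7 * naf K M 7
  + naf K L 7 * nbf J M 7 + nbf K L 7 * naf J M 7

def rhsZ (J K L M : Fin 8) : ℤ :=
  (if J = K then 1 else 0) * (if L = M then 1 else 0)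
  + (if L = J then 1 else 0) * (if K = M then 1 else 0)
  + (if K = L then 1 else 0) * (if J = M then 1 else 0)


noncomputable def Dpoly (x : Fin 8 → ℝ) : ℝ :=
  (6)*x 4*x 7^2 + (-3)*x 4*x 6^2 + (-3)*x 4*x 5^2 + (-2)*x 4^3 + (-3)*x 3*x 6^2*Real.sqrt 3 + (3)*x 3*x 5^2*Real.sqrt 3 + (6)*x 3^2*x 4 + (6)*x 2*x 5*x 6*Real.sqrt 3 + (6)*x 2^2*x 4 + (-6)*x 1*x 5*x 7*Real.sqrt 3 + (-3)*x 1^2*x 4 + (-3)*x 1^2*x 3*Real.sqrt 3 + (6)*x 0*x 6*x 7*Real.sqrt 3 + (6)*x 0*x 1*x 2*Real.sqrt 3 + (-3)*x 0^2*x 4 + (3)*x 0^2*x 3*Real.sqrt 3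

lemma hs3C : ((Real.sqrt 3 : ℝ) : ℂ)^2 = 3 := by
  rw [← Complex.ofReal_pow, Real.sq_sqrt (by norm_num : (0:ℝ) ≤ 3)]; norm_num

lemma hs3R : (Real.sqrt 3 : ℝ)^2 = 3 := Real.sq_sqrt (by norm_num)

lemma detA8 (x : Fin 8 → ℝ) : (A8 x).det = ((Dpoly x : ℝ) : ℂ) := by
  simp only [A8, Matrix.det_fin_three, Matrix.cons_val', Matrix.cons_val_zero, Matrix.empty_val',
    Matrix.cons_val_fin_one, Matrix.cons_val_one, Matrix.head_cons, Matrix.head_fin_const,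
    Matrix.cons_val_two, Matrix.tail_cons, Matrix.of_apply]
  simp only [Dpoly]
  push_cast
  linear_combination ((-2)*(x 4 : ℂ)*(x 7 : ℂ)^2*(Real.sqrt 3 : ℂ)^2 + (x 4 : ℂ)*(x 6 : ℂ)^2*(Real.sqrt 3 : ℂ)^2 + (x 4 : ℂ)*(x 5 : ℂ)^2*(Real.sqrt 3 : ℂ)^2 + (x 3 : ℂ)*(x 6 : ℂ)^2*(Real.sqrt 3 : ℂ)^3 + (-1)*(x 3 : ℂ)*(x 5 : ℂ)^2*(Real.sqrt 3 : ℂ)^3 + (-2)*(x 2 : ℂ)*(x 5 : ℂ)*(x 6 : ℂ)*(Real.sqrt 3 : ℂ)^3 + (2)*(x 1 : ℂ)*(x 5 : ℂ)*(x 7 : ℂ)*(Real.sqrt 3 : ℂ)^3 + (-2)*(x 0 : ℂ)*(x 6 : ℂ)*(x 7 : ℂ)*(Real.sqrt 3 : ℂ)^3) * Complex.I_sq + ((2)*(x 4 : ℂ)*(x 7 : ℂ)^2 + (-1)*(x 4 : ℂ)*(x 6 : ℂ)^2 + (-1)*(x 4 : ℂ)*(x 5 : ℂ)^2 + (-1)*(x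 3 : ℂ)*(x 6 : ℂ)^2*(Real.sqrt 3 : ℂ) + (x 3 : ℂ)*(x 5 : ℂ)^2*(Real.sqrt 3 : ℂ) + (2)*(x 3 : ℂ)^2*(x 4 : ℂ) + (2)*(x 2 : ℂ)*(x 5 : ℂ)*(x 6 : ℂ)*(Real.sqrt 3 : ℂ) + (2)*(x 2 : ℂ)^2*(x 4 : ℂ) + (-2)*(x 1 : ℂ)*(x 5 : ℂ)*(x 7 : ℂ)*(Real.sqrt 3 : ℂ) + (-1)*(x 1 : ℂ)^2*(x 4 : ℂ) + (-1)*(x 1 : ℂ)^2*(x 3 : ℂ)*(Real.sqrt 3 : ℂ) + (2)*(x 0 : ℂ)*(x 6 : ℂ)*(x 7 : ℂ)*(Real.sqrt 3 : ℂ) + (2)*(x 0 : ℂ)*(x 1 : ℂ)*(x 2 : ℂ)*(Real.sqrt 3 : ℂ) + (-1)*(x 0 : ℂ)^2*(x 4 : ℂ) + (x 0 : ℂ)^2*(x 3 : ℂ)*(Real.sqrt 3 : ℂ)) * hs3C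

lemma nafs1 : ∀ I J K, naf I J K = naf J I K := by decide
lemma nafs2 : ∀ I J K, naf I J K = naf I K J := by decide
lemma nbfs1 : ∀ I J K, nbf I J K = nbf J I K := by decide
lemma nbfs2 : ∀ I J K, nbf I J K = nbf I K J := by decide

lemma haT : ∀ I : Fin 8, naf I 0 0 + naf I 1 1 + naf I 2 2 + naf I 3 3 + naf I 4 4 + naf I 5 5 + naf I 6 6 + naf I 7 7 = 0 := by decide
lemma hbT : ∀ I : Fin 8, nbf I 0 0 + nbf I 1 1 + nbf I 2 2 + nbf I 3 3 + nbf I 4 4 + nbf I 5 5 + nbf I 6 6 + nbf I 7 7 = 0 := by decide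

lemma haZ : ∀ J K L M : Fin 8, Qa J K L M = 4 * rhsZ J K L M := by decide
lemma hbZ : ∀ J K L M : Fin 8, Qb J K L M = 0 := by decide

lemma rhs_cast (J K L M : Fin 8) : ((rhsZ J K L M : ℤ) : ℝ) =
    (if J = K then (1 : ℝ) else 0) * (if L = M then (1 : ℝ) else 0)
      + (if L = J then (1 : ℝ) else 0) * (if K = M then (1 : ℝ) else 0)
      + (if K = L then (1 : ℝ) else 0) * (if J = M then (1 : ℝ) else 0) := by
  simp only [rhsZ]; split_ifs <;> norm_num

lemma collapse1 (g : Fin 8 → ℝ) (a : Fin 8) (α : ℝ) :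
    (∑ P, g P * (if P = a then α else 0)) = g a * α := by
  simp [mul_ite, Finset.sum_ite_eq']

lemma collapse2 (g : Fin 8 → ℝ) (a b : Fin 8) (α β : ℝ) :
    (∑ P, g P * ((if P = a then α else 0) + (if P = b then β else 0))) = g a * α + g b * β := by
  simp [mul_add, Finset.sum_add_distrib, mul_ite, Finset.sum_ite_eq']

lemma collapse3 (g : Fin 8 → ℝ) (a b c : Fin 8) (α β γ : ℝ) :
    (∑ P, g P * ((if P = a then α else 0) + (if P = b then β else 0) + (if P = c then γ else 0)))
      = g a * α + g b * β + g c * γ := by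
  simp [mul_add, Finset.sum_add_distrib, mul_ite, Finset.sum_ite_eq']

lemma polar (S : Fin 8 → Fin 8 → Fin 8 → ℝ)
    (h1 : ∀ I J K, S I J K = S J I K) (h2 : ∀ I J K, S I J K = S I K J)
    (hz : ∀ x : Fin 8 → ℝ, (∑ I, ∑ J, ∑ K, S I J K * x I * x J * x K) = 0) :
    ∀ a b c, S a b c = 0 := by
  intro a b c
  have e7 := hz (fun P => (if P = a then (1:ℝ) else 0) + (if P = b then 1 else 0) + (if P = c then 1 else 0))
  have e6 := hz (fun P => (if P = a then (1:ℝ) else 0) + (if P = b then 1 else 0))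
  have e5 := hz (fun P => (if P = a then (1:ℝ) else 0) + (if P = c then 1 else 0))
  have e4 := hz (fun P => (if P = b then (1:ℝ) else 0) + (if P = c then 1 else 0))
  have e3 := hz (fun P => (if P = a then (1:ℝ) else 0))
  have e2 := hz (fun P => (if P = b then (1:ℝ) else 0))
  have e1 := hz (fun P => (if P = c then (1:ℝ) else 0))
  simp only [collapse1, collapse2, collapse3, mul_one, Finset.sum_add_distrib,
    ← Finset.sum_mul] at e1 e2 e3 e4 e5 e6 e7
  linarith [h1 a b c, h1 a c b, h1 b a c, h1 b c a, h1 c a b, h1 c b a,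
    h2 a b c, h2 a c b, h2 b a c, h2 b c a, h2 c a b, h2 c b a,
    h1 a a b, h1 a b a, h1 b a a, h2 a a b, h2 a b a, h2 b a a,
    h1 a a c, h1 a c a, h1 c a a, h2 a a c, h2 a c a, h2 c a a,
    h1 b b c, h1 b c b, h1 c b b, h2 b b c, h2 b c b, h2 c b b,
    h1 b b a, h1 b a b, h1 a b b, h2 b b a, h2 b a b, h2 a b b,
    h1 c c a, h1 c a c, h1 a c c, h2 c c a, h2 c a c, h2 a c c,
    h1 c c b, h1 c b c, h1 b c c, h2 c c b, h2 c b c, h2 b c c]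

theorem Tsum (x : Fin 8 → ℝ) :
    (∑ I, ∑ J, ∑ K, ((naf I J K : ℝ) + (nbf I J K : ℝ) * Real.sqrt 3) / 2 * x I * x J * x K)
      = Dpoly x / 2 := by
  simp only [Fin.sum_univ_eight]
  simp only [show naf 0 0 0 = 0 from rfl,
    show nbf 0 0 0 = 0 from rfl,
    show naf 0 0 1 = 0 from rfl,
    show nbf 0 0 1 = 0 from rfl,
    show naf 0 0 2 = 0 from rfl,
    show nbf 0 0 2 = 0 from rfl,
    show naf 0 0 3 = 0 from rfl,
    show nbf 0 0 3 = 1 from rfl,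
    show naf 0 0 4 = -1 from rfl,
    show nbf 0 0 4 = 0 from rfl,
    show naf 0 0 5 = 0 from rfl,
    show nbf 0 0 5 = 0 from rfl,
    show naf 0 0 6 = 0 from rfl,
    show nbf 0 0 6 = 0 from rfl,
    show naf 0 0 7 = 0 from rfl,
    show nbf 0 0 7 = 0 from rfl,
    show naf 0 1 0 = 0 from rfl,
    show nbf 0 1 0 = 0 from rfl,
    show naf 0 1 1 = 0 from rfl,
    show nbf 0 1 1 = 0 from rfl,
    show naf 0 1 2 = 0 from rfl,
    show nbf 0 1 2 = 1 from rfl,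
    show naf 0 1 3 = 0 from rfl,
    show nbf 0 1 3 = 0 from rfl,
    show naf 0 1 4 = 0 from rfl,
    show nbf 0 1 4 = 0 from rfl,
    show naf 0 1 5 = 0 from rfl,
    show nbf 0 1 5 = 0 from rfl,
    show naf 0 1 6 = 0 from rfl,
    show nbf 0 1 6 = 0 from rfl,
    show naf 0 1 7 = 0 from rfl,
    show nbf 0 1 7 = 0 from rfl,
    show naf 0 2 0 = 0 from rfl,
    show nbf 0 2 0 = 0 from rfl,
    show naf 0 2 1 = 0 from rfl,
    show nbf 0 2 1 = 1 from rfl,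
    show naf 0 2 2 = 0 from rfl,
    show nbf 0 2 2 = 0 from rfl,
    show naf 0 2 3 = 0 from rfl,
    show nbf 0 2 3 = 0 from rfl,
    show naf 0 2 4 = 0 from rfl,
    show nbf 0 2 4 = 0 from rfl,
    show naf 0 2 5 = 0 from rfl,
    show nbf 0 2 5 = 0 from rfl,
    show naf 0 2 6 = 0 from rfl,
    show nbf 0 2 6 = 0 from rfl,
    show naf 0 2 7 = 0 from rfl,
    show nbf 0 2 7 = 0 from rfl,
    show naf 0 3 0 = 0 from rfl,
    show nbf 0 3 0 = 1 from rfl,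
    show naf 0 3 1 = 0 from rfl,
    show nbf 0 3 1 = 0 from rfl,
    show naf 0 3 2 = 0 from rfl,
    show nbf 0 3 2 = 0 from rfl,
    show naf 0 3 3 = 0 from rfl,
    show nbf 0 3 3 = 0 from rfl,
    show naf 0 3 4 = 0 from rfl,
    show nbf 0 3 4 = 0 from rfl,
    show naf 0 3 5 = 0 from rfl,
    show nbf 0 3 5 = 0 from rfl,
    show naf 0 3 6 = 0 from rfl,
    show nbf 0 3 6 = 0 from rfl,
    show naf 0 3 7 = 0 from rfl,
    show nbf 0 3 7 = 0 from rfl,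
    show naf 0 4 0 = -1 from rfl,
    show nbf 0 4 0 = 0 from rfl,
    show naf 0 4 1 = 0 from rfl,
    show nbf 0 4 1 = 0 from rfl,
    show naf 0 4 2 = 0 from rfl,
    show nbf 0 4 2 = 0 from rfl,
    show naf 0 4 3 = 0 from rfl,
    show nbf 0 4 3 = 0 from rfl,
    show naf 0 4 4 = 0 from rfl,
    show nbf 0 4 4 = 0 from rfl,
    show naf 0 4 5 = 0 from rfl,
    show nbf 0 4 5 = 0 from rfl,
    show naf 0 4 6 = 0 from rfl,
    show nbf 0 4 6 = 0 from rfl,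
    show naf 0 4 7 = 0 from rfl,
    show nbf 0 4 7 = 0 from rfl,
    show naf 0 5 0 = 0 from rfl,
    show nbf 0 5 0 = 0 from rfl,
    show naf 0 5 1 = 0 from rfl,
    show nbf 0 5 1 = 0 from rfl,
    show naf 0 5 2 = 0 from rfl,
    show nbf 0 5 2 = 0 from rfl,
    show naf 0 5 3 = 0 from rfl,
    show nbf 0 5 3 = 0 from rfl,
    show naf 0 5 4 = 0 from rfl,
    show nbf 0 5 4 = 0 from rfl,
    show naf 0 5 5 = 0 from rfl,
    show nbf 0 5 5 = 0 from rfl,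
    show naf 0 5 6 = 0 from rfl,
    show nbf 0 5 6 = 0 from rfl,
    show naf 0 5 7 = 0 from rfl,
    show nbf 0 5 7 = 0 from rfl,
    show naf 0 6 0 = 0 from rfl,
    show nbf 0 6 0 = 0 from rfl,
    show naf 0 6 1 = 0 from rfl,
    show nbf 0 6 1 = 0 from rfl,
    show naf 0 6 2 = 0 from rfl,
    show nbf 0 6 2 = 0 from rfl,
    show naf 0 6 3 = 0 from rfl,
    show nbf 0 6 3 = 0 from rfl,
    show naf 0 6 4 = 0 from rfl,
    show nbf 0 6 4 = 0 from rfl,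
    show naf 0 6 5 = 0 from rfl,
    show nbf 0 6 5 = 0 from rfl,
    show naf 0 6 6 = 0 from rfl,
    show nbf 0 6 6 = 0 from rfl,
    show naf 0 6 7 = 0 from rfl,
    show nbf 0 6 7 = 1 from rfl,
    show naf 0 7 0 = 0 from rfl,
    show nbf 0 7 0 = 0 from rfl,
    show naf 0 7 1 = 0 from rfl,
    show nbf 0 7 1 = 0 from rfl,
    show naf 0 7 2 = 0 from rfl,
    show nbf 0 7 2 = 0 from rfl,
    show naf 0 7 3 = 0 from rfl,
    show nbf 0 7 3 = 0 from rfl,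
    show naf 0 7 4 = 0 from rfl,
    show nbf 0 7 4 = 0 from rfl,
    show naf 0 7 5 = 0 from rfl,
    show nbf 0 7 5 = 0 from rfl,
    show naf 0 7 6 = 0 from rfl,
    show nbf 0 7 6 = 1 from rfl,
    show naf 0 7 7 = 0 from rfl,
    show nbf 0 7 7 = 0 from rfl,
    show naf 1 0 0 = 0 from rfl,
    show nbf 1 0 0 = 0 from rfl,
    show naf 1 0 1 = 0 from rfl,
    show nbf 1 0 1 = 0 from rfl,
    show naf 1 0 2 = 0 from rfl,
    show nbf 1 0 2 = 1 from rfl,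
    show naf 1 0 3 = 0 from rfl,
    show nbf 1 0 3 = 0 from rfl,
    show naf 1 0 4 = 0 from rfl,
    show nbf 1 0 4 = 0 from rfl,
    show naf 1 0 5 = 0 from rfl,
    show nbf 1 0 5 = 0 from rfl,
    show naf 1 0 6 = 0 from rfl,
    show nbf 1 0 6 = 0 from rfl,
    show naf 1 0 7 = 0 from rfl,
    show nbf 1 0 7 = 0 from rfl,
    show naf 1 1 0 = 0 from rfl,
    show nbf 1 1 0 = 0 from rfl,
    show naf 1 1 1 = 0 from rfl,
    show nbf 1 1 1 = 0 from rfl,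
    show naf 1 1 2 = 0 from rfl,
    show nbf 1 1 2 = 0 from rfl,
    show naf 1 1 3 = 0 from rfl,
    show nbf 1 1 3 = -1 from rfl,
    show naf 1 1 4 = -1 from rfl,
    show nbf 1 1 4 = 0 from rfl,
    show naf 1 1 5 = 0 from rfl,
    show nbf 1 1 5 = 0 from rfl,
    show naf 1 1 6 = 0 from rfl,
    show nbf 1 1 6 = 0 from rfl,
    show naf 1 1 7 = 0 from rfl,
    show nbf 1 1 7 = 0 from rfl,
    show naf 1 2 0 = 0 from rfl,
    show nbf 1 2 0 = 1 from rfl,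
    show naf 1 2 1 = 0 from rfl,
    show nbf 1 2 1 = 0 from rfl,
    show naf 1 2 2 = 0 from rfl,
    show nbf 1 2 2 = 0 from rfl,
    show naf 1 2 3 = 0 from rfl,
    show nbf 1 2 3 = 0 from rfl,
    show naf 1 2 4 = 0 from rfl,
    show nbf 1 2 4 = 0 from rfl,
    show naf 1 2 5 = 0 from rfl,
    show nbf 1 2 5 = 0 from rfl,
    show naf 1 2 6 = 0 from rfl,
    show nbf 1 2 6 = 0 from rfl,
    show naf 1 2 7 = 0 from rfl,
    show nbf 1 2 7 = 0 from rfl,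
    show naf 1 3 0 = 0 from rfl,
    show nbf 1 3 0 = 0 from rfl,
    show naf 1 3 1 = 0 from rfl,
    show nbf 1 3 1 = -1 from rfl,
    show naf 1 3 2 = 0 from rfl,
    show nbf 1 3 2 = 0 from rfl,
    show naf 1 3 3 = 0 from rfl,
    show nbf 1 3 3 = 0 from rfl,
    show naf 1 3 4 = 0 from rfl,
    show nbf 1 3 4 = 0 from rfl,
    show naf 1 3 5 = 0 from rfl,
    show nbf 1 3 5 = 0 from rfl,
    show naf 1 3 6 = 0 from rfl,
    show nbf 1 3 6 = 0 from rfl,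
    show naf 1 3 7 = 0 from rfl,
    show nbf 1 3 7 = 0 from rfl,
    show naf 1 4 0 = 0 from rfl,
    show nbf 1 4 0 = 0 from rfl,
    show naf 1 4 1 = -1 from rfl,
    show nbf 1 4 1 = 0 from rfl,
    show naf 1 4 2 = 0 from rfl,
    show nbf 1 4 2 = 0 from rfl,
    show naf 1 4 3 = 0 from rfl,
    show nbf 1 4 3 = 0 from rfl,
    show naf 1 4 4 = 0 from rfl,
    show nbf 1 4 4 = 0 from rfl,
    show naf 1 4 5 = 0 from rfl,
    show nbf 1 4 5 = 0 from rfl,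
    show naf 1 4 6 = 0 from rfl,
    show nbf 1 4 6 = 0 from rfl,
    show naf 1 4 7 = 0 from rfl,
    show nbf 1 4 7 = 0 from rfl,
    show naf 1 5 0 = 0 from rfl,
    show nbf 1 5 0 = 0 from rfl,
    show naf 1 5 1 = 0 from rfl,
    show nbf 1 5 1 = 0 from rfl,
    show naf 1 5 2 = 0 from rfl,
    show nbf 1 5 2 = 0 from rfl,
    show naf 1 5 3 = 0 from rfl,
    show nbf 1 5 3 = 0 from rfl,
    show naf 1 5 4 = 0 from rfl,
    show nbf 1 5 4 = 0 from rfl,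
    show naf 1 5 5 = 0 from rfl,
    show nbf 1 5 5 = 0 from rfl,
    show naf 1 5 6 = 0 from rfl,
    show nbf 1 5 6 = 0 from rfl,
    show naf 1 5 7 = 0 from rfl,
    show nbf 1 5 7 = -1 from rfl,
    show naf 1 6 0 = 0 from rfl,
    show nbf 1 6 0 = 0 from rfl,
    show naf 1 6 1 = 0 from rfl,
    show nbf 1 6 1 = 0 from rfl,
    show naf 1 6 2 = 0 from rfl,
    show nbf 1 6 2 = 0 from rfl,
    show naf 1 6 3 = 0 from rfl,
    show nbf 1 6 3 = 0 from rfl,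
    show naf 1 6 4 = 0 from rfl,
    show nbf 1 6 4 = 0 from rfl,
    show naf 1 6 5 = 0 from rfl,
    show nbf 1 6 5 = 0 from rfl,
    show naf 1 6 6 = 0 from rfl,
    show nbf 1 6 6 = 0 from rfl,
    show naf 1 6 7 = 0 from rfl,
    show nbf 1 6 7 = 0 from rfl,
    show naf 1 7 0 = 0 from rfl,
    show nbf 1 7 0 = 0 from rfl,
    show naf 1 7 1 = 0 from rfl,
    show nbf 1 7 1 = 0 from rfl,
    show naf 1 7 2 = 0 from rfl,
    show nbf 1 7 2 = 0 from rfl,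
    show naf 1 7 3 = 0 from rfl,
    show nbf 1 7 3 = 0 from rfl,
    show naf 1 7 4 = 0 from rfl,
    show nbf 1 7 4 = 0 from rfl,
    show naf 1 7 5 = 0 from rfl,
    show nbf 1 7 5 = -1 from rfl,
    show naf 1 7 6 = 0 from rfl,
    show nbf 1 7 6 = 0 from rfl,
    show naf 1 7 7 = 0 from rfl,
    show nbf 1 7 7 = 0 from rfl,
    show naf 2 0 0 = 0 from rfl,
    show nbf 2 0 0 = 0 from rfl,
    show naf 2 0 1 = 0 from rfl,
    show nbf 2 0 1 = 1 from rfl,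
    show naf 2 0 2 = 0 from rfl,
    show nbf 2 0 2 = 0 from rfl,
    show naf 2 0 3 = 0 from rfl,
    show nbf 2 0 3 = 0 from rfl,
    show naf 2 0 4 = 0 from rfl,
    show nbf 2 0 4 = 0 from rfl,
    show naf 2 0 5 = 0 from rfl,
    show nbf 2 0 5 = 0 from rfl,
    show naf 2 0 6 = 0 from rfl,
    show nbf 2 0 6 = 0 from rfl,
    show naf 2 0 7 = 0 from rfl,
    show nbf 2 0 7 = 0 from rfl,
    show naf 2 1 0 = 0 from rfl,
    show nbf 2 1 0 = 1 from rfl,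
    show naf 2 1 1 = 0 from rfl,
    show nbf 2 1 1 = 0 from rfl,
    show naf 2 1 2 = 0 from rfl,
    show nbf 2 1 2 = 0 from rfl,
    show naf 2 1 3 = 0 from rfl,
    show nbf 2 1 3 = 0 from rfl,
    show naf 2 1 4 = 0 from rfl,
    show nbf 2 1 4 = 0 from rfl,
    show naf 2 1 5 = 0 from rfl,
    show nbf 2 1 5 = 0 from rfl,
    show naf 2 1 6 = 0 from rfl,
    show nbf 2 1 6 = 0 from rfl,
    show naf 2 1 7 = 0 from rfl,
    show nbf 2 1 7 = 0 from rfl,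
    show naf 2 2 0 = 0 from rfl,
    show nbf 2 2 0 = 0 from rfl,
    show naf 2 2 1 = 0 from rfl,
    show nbf 2 2 1 = 0 from rfl,
    show naf 2 2 2 = 0 from rfl,
    show nbf 2 2 2 = 0 from rfl,
    show naf 2 2 3 = 0 from rfl,
    show nbf 2 2 3 = 0 from rfl,
    show naf 2 2 4 = 2 from rfl,
    show nbf 2 2 4 = 0 from rfl,
    show naf 2 2 5 = 0 from rfl,
    show nbf 2 2 5 = 0 from rfl,
    show naf 2 2 6 = 0 from rfl,
    show nbf 2 2 6 = 0 from rfl,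
    show naf 2 2 7 = 0 from rfl,
    show nbf 2 2 7 = 0 from rfl,
    show naf 2 3 0 = 0 from rfl,
    show nbf 2 3 0 = 0 from rfl,
    show naf 2 3 1 = 0 from rfl,
    show nbf 2 3 1 = 0 from rfl,
    show naf 2 3 2 = 0 from rfl,
    show nbf 2 3 2 = 0 from rfl,
    show naf 2 3 3 = 0 from rfl,
    show nbf 2 3 3 = 0 from rfl,
    show naf 2 3 4 = 0 from rfl,
    show nbf 2 3 4 = 0 from rfl,
    show naf 2 3 5 = 0 from rfl,
    show nbf 2 3 5 = 0 from rfl,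
    show naf 2 3 6 = 0 from rfl,
    show nbf 2 3 6 = 0 from rfl,
    show naf 2 3 7 = 0 from rfl,
    show nbf 2 3 7 = 0 from rfl,
    show naf 2 4 0 = 0 from rfl,
    show nbf 2 4 0 = 0 from rfl,
    show naf 2 4 1 = 0 from rfl,
    show nbf 2 4 1 = 0 from rfl,
    show naf 2 4 2 = 2 from rfl,
    show nbf 2 4 2 = 0 from rfl,
    show naf 2 4 3 = 0 from rfl,
    show nbf 2 4 3 = 0 from rfl,
    show naf 2 4 4 = 0 from rfl,
    show nbf 2 4 4 = 0 from rfl,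
    show naf 2 4 5 = 0 from rfl,
    show nbf 2 4 5 = 0 from rfl,
    show naf 2 4 6 = 0 from rfl,
    show nbf 2 4 6 = 0 from rfl,
    show naf 2 4 7 = 0 from rfl,
    show nbf 2 4 7 = 0 from rfl,
    show naf 2 5 0 = 0 from rfl,
    show nbf 2 5 0 = 0 from rfl,
    show naf 2 5 1 = 0 from rfl,
    show nbf 2 5 1 = 0 from rfl,
    show naf 2 5 2 = 0 from rfl,
    show nbf 2 5 2 = 0 from rfl,
    show naf 2 5 3 = 0 from rfl,
    show nbf 2 5 3 = 0 from rfl,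
    show naf 2 5 4 = 0 from rfl,
    show nbf 2 5 4 = 0 from rfl,
    show naf 2 5 5 = 0 from rfl,
    show nbf 2 5 5 = 0 from rfl,
    show naf 2 5 6 = 0 from rfl,
    show nbf 2 5 6 = 1 from rfl,
    show naf 2 5 7 = 0 from rfl,
    show nbf 2 5 7 = 0 from rfl,
    show naf 2 6 0 = 0 from rfl,
    show nbf 2 6 0 = 0 from rfl,
    show naf 2 6 1 = 0 from rfl,
    show nbf 2 6 1 = 0 from rfl,
    show naf 2 6 2 = 0 from rfl,
    show nbf 2 6 2 = 0 from rfl,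
    show naf 2 6 3 = 0 from rfl,
    show nbf 2 6 3 = 0 from rfl,
    show naf 2 6 4 = 0 from rfl,
    show nbf 2 6 4 = 0 from rfl,
    show naf 2 6 5 = 0 from rfl,
    show nbf 2 6 5 = 1 from rfl,
    show naf 2 6 6 = 0 from rfl,
    show nbf 2 6 6 = 0 from rfl,
    show naf 2 6 7 = 0 from rfl,
    show nbf 2 6 7 = 0 from rfl,
    show naf 2 7 0 = 0 from rfl,
    show nbf 2 7 0 = 0 from rfl,
    show naf 2 7 1 = 0 from rfl,
    show nbf 2 7 1 = 0 from rfl,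
    show naf 2 7 2 = 0 from rfl,
    show nbf 2 7 2 = 0 from rfl,
    show naf 2 7 3 = 0 from rfl,
    show nbf 2 7 3 = 0 from rfl,
    show naf 2 7 4 = 0 from rfl,
    show nbf 2 7 4 = 0 from rfl,
    show naf 2 7 5 = 0 from rfl,
    show nbf 2 7 5 = 0 from rfl,
    show naf 2 7 6 = 0 from rfl,
    show nbf 2 7 6 = 0 from rfl,
    show naf 2 7 7 = 0 from rfl,
    show nbf 2 7 7 = 0 from rfl,
    show naf 3 0 0 = 0 from rfl,
    show nbf 3 0 0 = 1 from rfl,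
    show naf 3 0 1 = 0 from rfl,
    show nbf 3 0 1 = 0 from rfl,
    show naf 3 0 2 = 0 from rfl,
    show nbf 3 0 2 = 0 from rfl,
    show naf 3 0 3 = 0 from rfl,
    show nbf 3 0 3 = 0 from rfl,
    show naf 3 0 4 = 0 from rfl,
    show nbf 3 0 4 = 0 from rfl,
    show naf 3 0 5 = 0 from rfl,
    show nbf 3 0 5 = 0 from rfl,
    show naf 3 0 6 = 0 from rfl,
    show nbf 3 0 6 = 0 from rfl,
    show naf 3 0 7 = 0 from rfl,
    show nbf 3 0 7 = 0 from rfl,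
    show naf 3 1 0 = 0 from rfl,
    show nbf 3 1 0 = 0 from rfl,
    show naf 3 1 1 = 0 from rfl,
    show nbf 3 1 1 = -1 from rfl,
    show naf 3 1 2 = 0 from rfl,
    show nbf 3 1 2 = 0 from rfl,
    show naf 3 1 3 = 0 from rfl,
    show nbf 3 1 3 = 0 from rfl,
    show naf 3 1 4 = 0 from rfl,
    show nbf 3 1 4 = 0 from rfl,
    show naf 3 1 5 = 0 from rfl,
    show nbf 3 1 5 = 0 from rfl,
    show naf 3 1 6 = 0 from rfl,
    show nbf 3 1 6 = 0 from rfl,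
    show naf 3 1 7 = 0 from rfl,
    show nbf 3 1 7 = 0 from rfl,
    show naf 3 2 0 = 0 from rfl,
    show nbf 3 2 0 = 0 from rfl,
    show naf 3 2 1 = 0 from rfl,
    show nbf 3 2 1 = 0 from rfl,
    show naf 3 2 2 = 0 from rfl,
    show nbf 3 2 2 = 0 from rfl,
    show naf 3 2 3 = 0 from rfl,
    show nbf 3 2 3 = 0 from rfl,
    show naf 3 2 4 = 0 from rfl,
    show nbf 3 2 4 = 0 from rfl,
    show naf 3 2 5 = 0 from rfl,
    show nbf 3 2 5 = 0 from rfl,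
    show naf 3 2 6 = 0 from rfl,
    show nbf 3 2 6 = 0 from rfl,
    show naf 3 2 7 = 0 from rfl,
    show nbf 3 2 7 = 0 from rfl,
    show naf 3 3 0 = 0 from rfl,
    show nbf 3 3 0 = 0 from rfl,
    show naf 3 3 1 = 0 from rfl,
    show nbf 3 3 1 = 0 from rfl,
    show naf 3 3 2 = 0 from rfl,
    show nbf 3 3 2 = 0 from rfl,
    show naf 3 3 3 = 0 from rfl,
    show nbf 3 3 3 = 0 from rfl,
    show naf 3 3 4 = 2 from rfl,
    show nbf 3 3 4 = 0 from rfl,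
    show naf 3 3 5 = 0 from rfl,
    show nbf 3 3 5 = 0 from rfl,
    show naf 3 3 6 = 0 from rfl,
    show nbf 3 3 6 = 0 from rfl,
    show naf 3 3 7 = 0 from rfl,
    show nbf 3 3 7 = 0 from rfl,
    show naf 3 4 0 = 0 from rfl,
    show nbf 3 4 0 = 0 from rfl,
    show naf 3 4 1 = 0 from rfl,
    show nbf 3 4 1 = 0 from rfl,
    show naf 3 4 2 = 0 from rfl,
    show nbf 3 4 2 = 0 from rfl,
    show naf 3 4 3 = 2 from rfl,
    show nbf 3 4 3 = 0 from rfl,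
    show naf 3 4 4 = 0 from rfl,
    show nbf 3 4 4 = 0 from rfl,
    show naf 3 4 5 = 0 from rfl,
    show nbf 3 4 5 = 0 from rfl,
    show naf 3 4 6 = 0 from rfl,
    show nbf 3 4 6 = 0 from rfl,
    show naf 3 4 7 = 0 from rfl,
    show nbf 3 4 7 = 0 from rfl,
    show naf 3 5 0 = 0 from rfl,
    show nbf 3 5 0 = 0 from rfl,
    show naf 3 5 1 = 0 from rfl,
    show nbf 3 5 1 = 0 from rfl,
    show naf 3 5 2 = 0 from rfl,
    show nbf 3 5 2 = 0 from rfl,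
    show naf 3 5 3 = 0 from rfl,
    show nbf 3 5 3 = 0 from rfl,
    show naf 3 5 4 = 0 from rfl,
    show nbf 3 5 4 = 0 from rfl,
    show naf 3 5 5 = 0 from rfl,
    show nbf 3 5 5 = 1 from rfl,
    show naf 3 5 6 = 0 from rfl,
    show nbf 3 5 6 = 0 from rfl,
    show naf 3 5 7 = 0 from rfl,
    show nbf 3 5 7 = 0 from rfl,
    show naf 3 6 0 = 0 from rfl,
    show nbf 3 6 0 = 0 from rfl,
    show naf 3 6 1 = 0 from rfl,
    show nbf 3 6 1 = 0 from rfl,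
    show naf 3 6 2 = 0 from rfl,
    show nbf 3 6 2 = 0 from rfl,
    show naf 3 6 3 = 0 from rfl,
    show nbf 3 6 3 = 0 from rfl,
    show naf 3 6 4 = 0 from rfl,
    show nbf 3 6 4 = 0 from rfl,
    show naf 3 6 5 = 0 from rfl,
    show nbf 3 6 5 = 0 from rfl,
    show naf 3 6 6 = 0 from rfl,
    show nbf 3 6 6 = -1 from rfl,
    show naf 3 6 7 = 0 from rfl,
    show nbf 3 6 7 = 0 from rfl,
    show naf 3 7 0 = 0 from rfl,
    show nbf 3 7 0 = 0 from rfl,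
    show naf 3 7 1 = 0 from rfl,
    show nbf 3 7 1 = 0 from rfl,
    show naf 3 7 2 = 0 from rfl,
    show nbf 3 7 2 = 0 from rfl,
    show naf 3 7 3 = 0 from rfl,
    show nbf 3 7 3 = 0 from rfl,
    show naf 3 7 4 = 0 from rfl,
    show nbf 3 7 4 = 0 from rfl,
    show naf 3 7 5 = 0 from rfl,
    show nbf 3 7 5 = 0 from rfl,
    show naf 3 7 6 = 0 from rfl,
    show nbf 3 7 6 = 0 from rfl,
    show naf 3 7 7 = 0 from rfl,
    show nbf 3 7 7 = 0 from rfl,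
    show naf 4 0 0 = -1 from rfl,
    show nbf 4 0 0 = 0 from rfl,
    show naf 4 0 1 = 0 from rfl,
    show nbf 4 0 1 = 0 from rfl,
    show naf 4 0 2 = 0 from rfl,
    show nbf 4 0 2 = 0 from rfl,
    show naf 4 0 3 = 0 from rfl,
    show nbf 4 0 3 = 0 from rfl,
    show naf 4 0 4 = 0 from rfl,
    show nbf 4 0 4 = 0 from rfl,
    show naf 4 0 5 = 0 from rfl,
    show nbf 4 0 5 = 0 from rfl,
    show naf 4 0 6 = 0 from rfl,
    show nbf 4 0 6 = 0 from rfl,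
    show naf 4 0 7 = 0 from rfl,
    show nbf 4 0 7 = 0 from rfl,
    show naf 4 1 0 = 0 from rfl,
    show nbf 4 1 0 = 0 from rfl,
    show naf 4 1 1 = -1 from rfl,
    show nbf 4 1 1 = 0 from rfl,
    show naf 4 1 2 = 0 from rfl,
    show nbf 4 1 2 = 0 from rfl,
    show naf 4 1 3 = 0 from rfl,
    show nbf 4 1 3 = 0 from rfl,
    show naf 4 1 4 = 0 from rfl,
    show nbf 4 1 4 = 0 from rfl,
    show naf 4 1 5 = 0 from rfl,
    show nbf 4 1 5 = 0 from rfl,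
    show naf 4 1 6 = 0 from rfl,
    show nbf 4 1 6 = 0 from rfl,
    show naf 4 1 7 = 0 from rfl,
    show nbf 4 1 7 = 0 from rfl,
    show naf 4 2 0 = 0 from rfl,
    show nbf 4 2 0 = 0 from rfl,
    show naf 4 2 1 = 0 from rfl,
    show nbf 4 2 1 = 0 from rfl,
    show naf 4 2 2 = 2 from rfl,
    show nbf 4 2 2 = 0 from rfl,
    show naf 4 2 3 = 0 from rfl,
    show nbf 4 2 3 = 0 from rfl,
    show naf 4 2 4 = 0 from rfl,
    show nbf 4 2 4 = 0 from rfl,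
    show naf 4 2 5 = 0 from rfl,
    show nbf 4 2 5 = 0 from rfl,
    show naf 4 2 6 = 0 from rfl,
    show nbf 4 2 6 = 0 from rfl,
    show naf 4 2 7 = 0 from rfl,
    show nbf 4 2 7 = 0 from rfl,
    show naf 4 3 0 = 0 from rfl,
    show nbf 4 3 0 = 0 from rfl,
    show naf 4 3 1 = 0 from rfl,
    show nbf 4 3 1 = 0 from rfl,
    show naf 4 3 2 = 0 from rfl,
    show nbf 4 3 2 = 0 from rfl,
    show naf 4 3 3 = 2 from rfl,
    show nbf 4 3 3 = 0 from rfl,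
    show naf 4 3 4 = 0 from rfl,
    show nbf 4 3 4 = 0 from rfl,
    show naf 4 3 5 = 0 from rfl,
    show nbf 4 3 5 = 0 from rfl,
    show naf 4 3 6 = 0 from rfl,
    show nbf 4 3 6 = 0 from rfl,
    show naf 4 3 7 = 0 from rfl,
    show nbf 4 3 7 = 0 from rfl,
    show naf 4 4 0 = 0 from rfl,
    show nbf 4 4 0 = 0 from rfl,
    show naf 4 4 1 = 0 from rfl,
    show nbf 4 4 1 = 0 from rfl,
    show naf 4 4 2 = 0 from rfl,
    show nbf 4 4 2 = 0 from rfl,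
    show naf 4 4 3 = 0 from rfl,
    show nbf 4 4 3 = 0 from rfl,
    show naf 4 4 4 = -2 from rfl,
    show nbf 4 4 4 = 0 from rfl,
    show naf 4 4 5 = 0 from rfl,
    show nbf 4 4 5 = 0 from rfl,
    show naf 4 4 6 = 0 from rfl,
    show nbf 4 4 6 = 0 from rfl,
    show naf 4 4 7 = 0 from rfl,
    show nbf 4 4 7 = 0 from rfl,
    show naf 4 5 0 = 0 from rfl,
    show nbf 4 5 0 = 0 from rfl,
    show naf 4 5 1 = 0 from rfl,
    show nbf 4 5 1 = 0 from rfl,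
    show naf 4 5 2 = 0 from rfl,
    show nbf 4 5 2 = 0 from rfl,
    show naf 4 5 3 = 0 from rfl,
    show nbf 4 5 3 = 0 from rfl,
    show naf 4 5 4 = 0 from rfl,
    show nbf 4 5 4 = 0 from rfl,
    show naf 4 5 5 = -1 from rfl,
    show nbf 4 5 5 = 0 from rfl,
    show naf 4 5 6 = 0 from rfl,
    show nbf 4 5 6 = 0 from rfl,
    show naf 4 5 7 = 0 from rfl,
    show nbf 4 5 7 = 0 from rfl,
    show naf 4 6 0 = 0 from rfl,
    show nbf 4 6 0 = 0 from rfl,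
    show naf 4 6 1 = 0 from rfl,
    show nbf 4 6 1 = 0 from rfl,
    show naf 4 6 2 = 0 from rfl,
    show nbf 4 6 2 = 0 from rfl,
    show naf 4 6 3 = 0 from rfl,
    show nbf 4 6 3 = 0 from rfl,
    show naf 4 6 4 = 0 from rfl,
    show nbf 4 6 4 = 0 from rfl,
    show naf 4 6 5 = 0 from rfl,
    show nbf 4 6 5 = 0 from rfl,
    show naf 4 6 6 = -1 from rfl,
    show nbf 4 6 6 = 0 from rfl,
    show naf 4 6 7 = 0 from rfl,
    show nbf 4 6 7 = 0 from rfl,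
    show naf 4 7 0 = 0 from rfl,
    show nbf 4 7 0 = 0 from rfl,
    show naf 4 7 1 = 0 from rfl,
    show nbf 4 7 1 = 0 from rfl,
    show naf 4 7 2 = 0 from rfl,
    show nbf 4 7 2 = 0 from rfl,
    show naf 4 7 3 = 0 from rfl,
    show nbf 4 7 3 = 0 from rfl,
    show naf 4 7 4 = 0 from rfl,
    show nbf 4 7 4 = 0 from rfl,
    show naf 4 7 5 = 0 from rfl,
    show nbf 4 7 5 = 0 from rfl,
    show naf 4 7 6 = 0 from rfl,
    show nbf 4 7 6 = 0 from rfl,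
    show naf 4 7 7 = 2 from rfl,
    show nbf 4 7 7 = 0 from rfl,
    show naf 5 0 0 = 0 from rfl,
    show nbf 5 0 0 = 0 from rfl,
    show naf 5 0 1 = 0 from rfl,
    show nbf 5 0 1 = 0 from rfl,
    show naf 5 0 2 = 0 from rfl,
    show nbf 5 0 2 = 0 from rfl,
    show naf 5 0 3 = 0 from rfl,
    show nbf 5 0 3 = 0 from rfl,
    show naf 5 0 4 = 0 from rfl,
    show nbf 5 0 4 = 0 from rfl,
    show naf 5 0 5 = 0 from rfl,
    show nbf 5 0 5 = 0 from rfl,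
    show naf 5 0 6 = 0 from rfl,
    show nbf 5 0 6 = 0 from rfl,
    show naf 5 0 7 = 0 from rfl,
    show nbf 5 0 7 = 0 from rfl,
    show naf 5 1 0 = 0 from rfl,
    show nbf 5 1 0 = 0 from rfl,
    show naf 5 1 1 = 0 from rfl,
    show nbf 5 1 1 = 0 from rfl,
    show naf 5 1 2 = 0 from rfl,
    show nbf 5 1 2 = 0 from rfl,
    show naf 5 1 3 = 0 from rfl,
    show nbf 5 1 3 = 0 from rfl,
    show naf 5 1 4 = 0 from rfl,
    show nbf 5 1 4 = 0 from rfl,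
    show naf 5 1 5 = 0 from rfl,
    show nbf 5 1 5 = 0 from rfl,
    show naf 5 1 6 = 0 from rfl,
    show nbf 5 1 6 = 0 from rfl,
    show naf 5 1 7 = 0 from rfl,
    show nbf 5 1 7 = -1 from rfl,
    show naf 5 2 0 = 0 from rfl,
    show nbf 5 2 0 = 0 from rfl,
    show naf 5 2 1 = 0 from rfl,
    show nbf 5 2 1 = 0 from rfl,
    show naf 5 2 2 = 0 from rfl,
    show nbf 5 2 2 = 0 from rfl,
    show naf 5 2 3 = 0 from rfl,
    show nbf 5 2 3 = 0 from rfl,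
    show naf 5 2 4 = 0 from rfl,
    show nbf 5 2 4 = 0 from rfl,
    show naf 5 2 5 = 0 from rfl,
    show nbf 5 2 5 = 0 from rfl,
    show naf 5 2 6 = 0 from rfl,
    show nbf 5 2 6 = 1 from rfl,
    show naf 5 2 7 = 0 from rfl,
    show nbf 5 2 7 = 0 from rfl,
    show naf 5 3 0 = 0 from rfl,
    show nbf 5 3 0 = 0 from rfl,
    show naf 5 3 1 = 0 from rfl,
    show nbf 5 3 1 = 0 from rfl,
    show naf 5 3 2 = 0 from rfl,
    show nbf 5 3 2 = 0 from rfl,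
    show naf 5 3 3 = 0 from rfl,
    show nbf 5 3 3 = 0 from rfl,
    show naf 5 3 4 = 0 from rfl,
    show nbf 5 3 4 = 0 from rfl,
    show naf 5 3 5 = 0 from rfl,
    show nbf 5 3 5 = 1 from rfl,
    show naf 5 3 6 = 0 from rfl,
    show nbf 5 3 6 = 0 from rfl,
    show naf 5 3 7 = 0 from rfl,
    show nbf 5 3 7 = 0 from rfl,
    show naf 5 4 0 = 0 from rfl,
    show nbf 5 4 0 = 0 from rfl,
    show naf 5 4 1 = 0 from rfl,
    show nbf 5 4 1 = 0 from rfl,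
    show naf 5 4 2 = 0 from rfl,
    show nbf 5 4 2 = 0 from rfl,
    show naf 5 4 3 = 0 from rfl,
    show nbf 5 4 3 = 0 from rfl,
    show naf 5 4 4 = 0 from rfl,
    show nbf 5 4 4 = 0 from rfl,
    show naf 5 4 5 = -1 from rfl,
    show nbf 5 4 5 = 0 from rfl,
    show naf 5 4 6 = 0 from rfl,
    show nbf 5 4 6 = 0 from rfl,
    show naf 5 4 7 = 0 from rfl,
    show nbf 5 4 7 = 0 from rfl,
    show naf 5 5 0 = 0 from rfl,
    show nbf 5 5 0 = 0 from rfl,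
    show naf 5 5 1 = 0 from rfl,
    show nbf 5 5 1 = 0 from rfl,
    show naf 5 5 2 = 0 from rfl,
    show nbf 5 5 2 = 0 from rfl,
    show naf 5 5 3 = 0 from rfl,
    show nbf 5 5 3 = 1 from rfl,
    show naf 5 5 4 = -1 from rfl,
    show nbf 5 5 4 = 0 from rfl,
    show naf 5 5 5 = 0 from rfl,
    show nbf 5 5 5 = 0 from rfl,
    show naf 5 5 6 = 0 from rfl,
    show nbf 5 5 6 = 0 from rfl,
    show naf 5 5 7 = 0 from rfl,
    show nbf 5 5 7 = 0 from rfl,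
    show naf 5 6 0 = 0 from rfl,
    show nbf 5 6 0 = 0 from rfl,
    show naf 5 6 1 = 0 from rfl,
    show nbf 5 6 1 = 0 from rfl,
    show naf 5 6 2 = 0 from rfl,
    show nbf 5 6 2 = 1 from rfl,
    show naf 5 6 3 = 0 from rfl,
    show nbf 5 6 3 = 0 from rfl,
    show naf 5 6 4 = 0 from rfl,
    show nbf 5 6 4 = 0 from rfl,
    show naf 5 6 5 = 0 from rfl,
    show nbf 5 6 5 = 0 from rfl,
    show naf 5 6 6 = 0 from rfl,
    show nbf 5 6 6 = 0 from rfl,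
    show naf 5 6 7 = 0 from rfl,
    show nbf 5 6 7 = 0 from rfl,
    show naf 5 7 0 = 0 from rfl,
    show nbf 5 7 0 = 0 from rfl,
    show naf 5 7 1 = 0 from rfl,
    show nbf 5 7 1 = -1 from rfl,
    show naf 5 7 2 = 0 from rfl,
    show nbf 5 7 2 = 0 from rfl,
    show naf 5 7 3 = 0 from rfl,
    show nbf 5 7 3 = 0 from rfl,
    show naf 5 7 4 = 0 from rfl,
    show nbf 5 7 4 = 0 from rfl,
    show naf 5 7 5 = 0 from rfl,
    show nbf 5 7 5 = 0 from rfl,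
    show naf 5 7 6 = 0 from rfl,
    show nbf 5 7 6 = 0 from rfl,
    show naf 5 7 7 = 0 from rfl,
    show nbf 5 7 7 = 0 from rfl,
    show naf 6 0 0 = 0 from rfl,
    show nbf 6 0 0 = 0 from rfl,
    show naf 6 0 1 = 0 from rfl,
    show nbf 6 0 1 = 0 from rfl,
    show naf 6 0 2 = 0 from rfl,
    show nbf 6 0 2 = 0 from rfl,
    show naf 6 0 3 = 0 from rfl,
    show nbf 6 0 3 = 0 from rfl,
    show naf 6 0 4 = 0 from rfl,
    show nbf 6 0 4 = 0 from rfl,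
    show naf 6 0 5 = 0 from rfl,
    show nbf 6 0 5 = 0 from rfl,
    show naf 6 0 6 = 0 from rfl,
    show nbf 6 0 6 = 0 from rfl,
    show naf 6 0 7 = 0 from rfl,
    show nbf 6 0 7 = 1 from rfl,
    show naf 6 1 0 = 0 from rfl,
    show nbf 6 1 0 = 0 from rfl,
    show naf 6 1 1 = 0 from rfl,
    show nbf 6 1 1 = 0 from rfl,
    show naf 6 1 2 = 0 from rfl,
    show nbf 6 1 2 = 0 from rfl,
    show naf 6 1 3 = 0 from rfl,
    show nbf 6 1 3 = 0 from rfl,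
    show naf 6 1 4 = 0 from rfl,
    show nbf 6 1 4 = 0 from rfl,
    show naf 6 1 5 = 0 from rfl,
    show nbf 6 1 5 = 0 from rfl,
    show naf 6 1 6 = 0 from rfl,
    show nbf 6 1 6 = 0 from rfl,
    show naf 6 1 7 = 0 from rfl,
    show nbf 6 1 7 = 0 from rfl,
    show naf 6 2 0 = 0 from rfl,
    show nbf 6 2 0 = 0 from rfl,
    show naf 6 2 1 = 0 from rfl,
    show nbf 6 2 1 = 0 from rfl,
    show naf 6 2 2 = 0 from rfl,
    show nbf 6 2 2 = 0 from rfl,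
    show naf 6 2 3 = 0 from rfl,
    show nbf 6 2 3 = 0 from rfl,
    show naf 6 2 4 = 0 from rfl,
    show nbf 6 2 4 = 0 from rfl,
    show naf 6 2 5 = 0 from rfl,
    show nbf 6 2 5 = 1 from rfl,
    show naf 6 2 6 = 0 from rfl,
    show nbf 6 2 6 = 0 from rfl,
    show naf 6 2 7 = 0 from rfl,
    show nbf 6 2 7 = 0 from rfl,
    show naf 6 3 0 = 0 from rfl,
    show nbf 6 3 0 = 0 from rfl,
    show naf 6 3 1 = 0 from rfl,
    show nbf 6 3 1 = 0 from rfl,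
    show naf 6 3 2 = 0 from rfl,
    show nbf 6 3 2 = 0 from rfl,
    show naf 6 3 3 = 0 from rfl,
    show nbf 6 3 3 = 0 from rfl,
    show naf 6 3 4 = 0 from rfl,
    show nbf 6 3 4 = 0 from rfl,
    show naf 6 3 5 = 0 from rfl,
    show nbf 6 3 5 = 0 from rfl,
    show naf 6 3 6 = 0 from rfl,
    show nbf 6 3 6 = -1 from rfl,
    show naf 6 3 7 = 0 from rfl,
    show nbf 6 3 7 = 0 from rfl,
    show naf 6 4 0 = 0 from rfl,
    show nbf 6 4 0 = 0 from rfl,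
    show naf 6 4 1 = 0 from rfl,
    show nbf 6 4 1 = 0 from rfl,
    show naf 6 4 2 = 0 from rfl,
    show nbf 6 4 2 = 0 from rfl,
    show naf 6 4 3 = 0 from rfl,
    show nbf 6 4 3 = 0 from rfl,
    show naf 6 4 4 = 0 from rfl,
    show nbf 6 4 4 = 0 from rfl,
    show naf 6 4 5 = 0 from rfl,
    show nbf 6 4 5 = 0 from rfl,
    show naf 6 4 6 = -1 from rfl,
    show nbf 6 4 6 = 0 from rfl,
    show naf 6 4 7 = 0 from rfl,
    show nbf 6 4 7 = 0 from rfl,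
    show naf 6 5 0 = 0 from rfl,
    show nbf 6 5 0 = 0 from rfl,
    show naf 6 5 1 = 0 from rfl,
    show nbf 6 5 1 = 0 from rfl,
    show naf 6 5 2 = 0 from rfl,
    show nbf 6 5 2 = 1 from rfl,
    show naf 6 5 3 = 0 from rfl,
    show nbf 6 5 3 = 0 from rfl,
    show naf 6 5 4 = 0 from rfl,
    show nbf 6 5 4 = 0 from rfl,
    show naf 6 5 5 = 0 from rfl,
    show nbf 6 5 5 = 0 from rfl,
    show naf 6 5 6 = 0 from rfl,
    show nbf 6 5 6 = 0 from rfl,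
    show naf 6 5 7 = 0 from rfl,
    show nbf 6 5 7 = 0 from rfl,
    show naf 6 6 0 = 0 from rfl,
    show nbf 6 6 0 = 0 from rfl,
    show naf 6 6 1 = 0 from rfl,
    show nbf 6 6 1 = 0 from rfl,
    show naf 6 6 2 = 0 from rfl,
    show nbf 6 6 2 = 0 from rfl,
    show naf 6 6 3 = 0 from rfl,
    show nbf 6 6 3 = -1 from rfl,
    show naf 6 6 4 = -1 from rfl,
    show nbf 6 6 4 = 0 from rfl,
    show naf 6 6 5 = 0 from rfl,
    show nbf 6 6 5 = 0 from rfl,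
    show naf 6 6 6 = 0 from rfl,
    show nbf 6 6 6 = 0 from rfl,
    show naf 6 6 7 = 0 from rfl,
    show nbf 6 6 7 = 0 from rfl,
    show naf 6 7 0 = 0 from rfl,
    show nbf 6 7 0 = 1 from rfl,
    show naf 6 7 1 = 0 from rfl,
    show nbf 6 7 1 = 0 from rfl,
    show naf 6 7 2 = 0 from rfl,
    show nbf 6 7 2 = 0 from rfl,
    show naf 6 7 3 = 0 from rfl,
    show nbf 6 7 3 = 0 from rfl,
    show naf 6 7 4 = 0 from rfl,
    show nbf 6 7 4 = 0 from rfl,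
    show naf 6 7 5 = 0 from rfl,
    show nbf 6 7 5 = 0 from rfl,
    show naf 6 7 6 = 0 from rfl,
    show nbf 6 7 6 = 0 from rfl,
    show naf 6 7 7 = 0 from rfl,
    show nbf 6 7 7 = 0 from rfl,
    show naf 7 0 0 = 0 from rfl,
    show nbf 7 0 0 = 0 from rfl,
    show naf 7 0 1 = 0 from rfl,
    show nbf 7 0 1 = 0 from rfl,
    show naf 7 0 2 = 0 from rfl,
    show nbf 7 0 2 = 0 from rfl,
    show naf 7 0 3 = 0 from rfl,
    show nbf 7 0 3 = 0 from rfl,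
    show naf 7 0 4 = 0 from rfl,
    show nbf 7 0 4 = 0 from rfl,
    show naf 7 0 5 = 0 from rfl,
    show nbf 7 0 5 = 0 from rfl,
    show naf 7 0 6 = 0 from rfl,
    show nbf 7 0 6 = 1 from rfl,
    show naf 7 0 7 = 0 from rfl,
    show nbf 7 0 7 = 0 from rfl,
    show naf 7 1 0 = 0 from rfl,
    show nbf 7 1 0 = 0 from rfl,
    show naf 7 1 1 = 0 from rfl,
    show nbf 7 1 1 = 0 from rfl,
    show naf 7 1 2 = 0 from rfl,
    show nbf 7 1 2 = 0 from rfl,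
    show naf 7 1 3 = 0 from rfl,
    show nbf 7 1 3 = 0 from rfl,
    show naf 7 1 4 = 0 from rfl,
    show nbf 7 1 4 = 0 from rfl,
    show naf 7 1 5 = 0 from rfl,
    show nbf 7 1 5 = -1 from rfl,
    show naf 7 1 6 = 0 from rfl,
    show nbf 7 1 6 = 0 from rfl,
    show naf 7 1 7 = 0 from rfl,
    show nbf 7 1 7 = 0 from rfl,
    show naf 7 2 0 = 0 from rfl,
    show nbf 7 2 0 = 0 from rfl,
    show naf 7 2 1 = 0 from rfl,
    show nbf 7 2 1 = 0 from rfl,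
    show naf 7 2 2 = 0 from rfl,
    show nbf 7 2 2 = 0 from rfl,
    show naf 7 2 3 = 0 from rfl,
    show nbf 7 2 3 = 0 from rfl,
    show naf 7 2 4 = 0 from rfl,
    show nbf 7 2 4 = 0 from rfl,
    show naf 7 2 5 = 0 from rfl,
    show nbf 7 2 5 = 0 from rfl,
    show naf 7 2 6 = 0 from rfl,
    show nbf 7 2 6 = 0 from rfl,
    show naf 7 2 7 = 0 from rfl,
    show nbf 7 2 7 = 0 from rfl,
    show naf 7 3 0 = 0 from rfl,
    show nbf 7 3 0 = 0 from rfl,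
    show naf 7 3 1 = 0 from rfl,
    show nbf 7 3 1 = 0 from rfl,
    show naf 7 3 2 = 0 from rfl,
    show nbf 7 3 2 = 0 from rfl,
    show naf 7 3 3 = 0 from rfl,
    show nbf 7 3 3 = 0 from rfl,
    show naf 7 3 4 = 0 from rfl,
    show nbf 7 3 4 = 0 from rfl,
    show naf 7 3 5 = 0 from rfl,
    show nbf 7 3 5 = 0 from rfl,
    show naf 7 3 6 = 0 from rfl,
    show nbf 7 3 6 = 0 from rfl,
    show naf 7 3 7 = 0 from rfl,
    show nbf 7 3 7 = 0 from rfl,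
    show naf 7 4 0 = 0 from rfl,
    show nbf 7 4 0 = 0 from rfl,
    show naf 7 4 1 = 0 from rfl,
    show nbf 7 4 1 = 0 from rfl,
    show naf 7 4 2 = 0 from rfl,
    show nbf 7 4 2 = 0 from rfl,
    show naf 7 4 3 = 0 from rfl,
    show nbf 7 4 3 = 0 from rfl,
    show naf 7 4 4 = 0 from rfl,
    show nbf 7 4 4 = 0 from rfl,
    show naf 7 4 5 = 0 from rfl,
    show nbf 7 4 5 = 0 from rfl,
    show naf 7 4 6 = 0 from rfl,
    show nbf 7 4 6 = 0 from rfl,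
    show naf 7 4 7 = 2 from rfl,
    show nbf 7 4 7 = 0 from rfl,
    show naf 7 5 0 = 0 from rfl,
    show nbf 7 5 0 = 0 from rfl,
    show naf 7 5 1 = 0 from rfl,
    show nbf 7 5 1 = -1 from rfl,
    show naf 7 5 2 = 0 from rfl,
    show nbf 7 5 2 = 0 from rfl,
    show naf 7 5 3 = 0 from rfl,
    show nbf 7 5 3 = 0 from rfl,
    show naf 7 5 4 = 0 from rfl,
    show nbf 7 5 4 = 0 from rfl,
    show naf 7 5 5 = 0 from rfl,
    show nbf 7 5 5 = 0 from rfl,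
    show naf 7 5 6 = 0 from rfl,
    show nbf 7 5 6 = 0 from rfl,
    show naf 7 5 7 = 0 from rfl,
    show nbf 7 5 7 = 0 from rfl,
    show naf 7 6 0 = 0 from rfl,
    show nbf 7 6 0 = 1 from rfl,
    show naf 7 6 1 = 0 from rfl,
    show nbf 7 6 1 = 0 from rfl,
    show naf 7 6 2 = 0 from rfl,
    show nbf 7 6 2 = 0 from rfl,
    show naf 7 6 3 = 0 from rfl,
    show nbf 7 6 3 = 0 from rfl,
    show naf 7 6 4 = 0 from rfl,
    show nbf 7 6 4 = 0 from rfl,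
    show naf 7 6 5 = 0 from rfl,
    show nbf 7 6 5 = 0 from rfl,
    show naf 7 6 6 = 0 from rfl,
    show nbf 7 6 6 = 0 from rfl,
    show naf 7 6 7 = 0 from rfl,
    show nbf 7 6 7 = 0 from rfl,
    show naf 7 7 0 = 0 from rfl,
    show nbf 7 7 0 = 0 from rfl,
    show naf 7 7 1 = 0 from rfl,
    show nbf 7 7 1 = 0 from rfl,
    show naf 7 7 2 = 0 from rfl,
    show nbf 7 7 2 = 0 from rfl,
    show naf 7 7 3 = 0 from rfl,
    show nbf 7 7 3 = 0 from rfl,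
    show naf 7 7 4 = 2 from rfl,
    show nbf 7 7 4 = 0 from rfl,
    show naf 7 7 5 = 0 from rfl,
    show nbf 7 7 5 = 0 from rfl,
    show naf 7 7 6 = 0 from rfl,
    show nbf 7 7 6 = 0 from rfl,
    show naf 7 7 7 = 0 from rfl,
    show nbf 7 7 7 = 0 from rfl]
  simp only [Dpoly]
  push_cast
  ring

/-- `det A(x)` is real for every `x ∈ ℝ⁸`, and the totally symmetric tensor `Υ` on `ℝ⁸`
with `Υ_{IJK}x^Ix^Jx^K = ½ det A(x)` satisfies total symmetry (i), trace-freeness (ii),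
and the quadratic identity (iii). -/
theorem statement3 (Υ : Fin 8 → Fin 8 → Fin 8 → ℝ)
    (hsym1 : ∀ I J K, Υ I J K = Υ J I K)
    (hsym2 : ∀ I J K, Υ I J K = Υ I K J)
    (hdef : ∀ x : Fin 8 → ℝ,
      ((∑ I, ∑ J, ∑ K, Υ I J K * x I * x J * x K : ℝ) : ℂ) = (1 / 2) * (A8 x).det) :
    (∀ x : Fin 8 → ℝ, ∃ r : ℝ, (A8 x).det = (r : ℂ)) ∧
    ((∀ I J K, Υ I J K = Υ J I K) ∧ (∀ I J K, Υ I J K = Υ I K J)) ∧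
    (∀ I, ∑ J, Υ I J J = 0) ∧
    (∀ J K L M, (∑ I, (Υ J K I * Υ L M I + Υ L J I * Υ K M I + Υ K L I * Υ J M I)) =
      (if J = K then (1 : ℝ) else 0) * (if L = M then (1 : ℝ) else 0)
      + (if L = J then (1 : ℝ) else 0) * (if K = M then (1 : ℝ) else 0)
      + (if K = L then (1 : ℝ) else 0) * (if J = M then (1 : ℝ) else 0)) := by
  have hUsum : ∀ x : Fin 8 → ℝ,
      (∑ I, ∑ J, ∑ K, Υ I J K * x I * x J * x K) = Dpoly x / 2 := by
    intro x
    have h := hdef x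
    rw [detA8 x] at h
    have h2 : ((∑ I, ∑ J, ∑ K, Υ I J K * x I * x J * x K : ℝ) : ℂ) = ((Dpoly x / 2 : ℝ) : ℂ) := by
      rw [h]; push_cast; ring
    exact_mod_cast h2
  have hz : ∀ x : Fin 8 → ℝ,
      (∑ I, ∑ J, ∑ K, (Υ I J K - ((naf I J K : ℝ) + (nbf I J K : ℝ) * Real.sqrt 3) / 2)
        * x I * x J * x K) = 0 := by
    intro x
    simp only [sub_mul, Finset.sum_sub_distrib]
    rw [hUsum x, Tsum x]
    ring
  have hval0 := polar (fun I J K => Υ I J K - ((naf I J K : ℝ) + (nbf I J K : ℝ) * Real.sqrt 3) / 2)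
    (fun I J K => by rw [hsym1 I J K, nafs1 I J K, nbfs1 I J K])
    (fun I J K => by rw [hsym2 I J K, nafs2 I J K, nbfs2 I J K])
    hz
  have hval : ∀ a b c, Υ a b c = ((naf a b c : ℝ) + (nbf a b c : ℝ) * Real.sqrt 3) / 2 := by
    intro a b c
    have := hval0 a b c
    linarith [this]
  refine ⟨?_, ⟨hsym1, hsym2⟩, ?_, ?_⟩
  · intro x
    exact ⟨Dpoly x, detA8 x⟩
  · intro I
    simp only [Fin.sum_univ_eight, hval]
    have ha := congrArg (fun z : ℤ => (z : ℝ)) (haT I)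
    have hb := congrArg (fun z : ℤ => (z : ℝ)) (hbT I)
    push_cast at ha hb
    linear_combination (1/2 : ℝ) * ha + (Real.sqrt 3 / 2) * hb
  · intro J K L M
    have ha := congrArg (fun z : ℤ => (z : ℝ)) (haZ J K L M)
    have hb := congrArg (fun z : ℤ => (z : ℝ)) (hbZ J K L M)
    simp only [Qa, Qb] at ha hb
    push_cast at ha hb
    rw [rhs_cast J K L M] at ha
    simp only [Fin.sum_univ_eight, hval]
    linear_combination (1/4 : ℝ) * ha + (Real.sqrt 3 / 4) * hb + (((nbf J K 0 : ℝ) * (nbf L M 0 : ℝ) + (nbf L J 0 : ℝ) * (nbf K M 0 : ℝ) + (nbf K L 0 : ℝ) * (nbf J M 0 : ℝ) + (nbf J K 1 : ℝ) * (nbf L M 1 : ℝ) + (nbf L J 1 : ℝ) * (nbf K M 1 : ℝ) + (nbf K L 1 : ℝ) * (nbf J M 1 : ℝ) + (nbf J K 2 : ℝ) * (nbf L M 2 : ℝ) + (nbf L J 2 : ℝ) * (nbf K M 2 : ℝ) + (nbf K L 2 : ℝ) * (nbf J M 2 : ℝ) + (nbf J K 3 : ℝ) * (nbf L M 3 : ℝ)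 + (nbf L J 3 : ℝ) * (nbf K M 3 : ℝ) + (nbf K L 3 : ℝ) * (nbf J M 3 : ℝ) + (nbf J K 4 : ℝ) * (nbf L M 4 : ℝ) + (nbf L J 4 : ℝ) * (nbf K M 4 : ℝ) + (nbf K L 4 : ℝ) * (nbf J M 4 : ℝ) + (nbf J K 5 : ℝ) * (nbf L M 5 : ℝ) + (nbf L J 5 : ℝ) * (nbf K M 5 : ℝ) + (nbf K L 5 : ℝ) * (nbf J M 5 : ℝ) + (nbf J K 6 : ℝ) * (nbf L M 6 : ℝ) + (nbf L J 6 : ℝ) * (nbf K M 6 : ℝ) + (nbf K L 6 : ℝ) * (nbf J M 6 : ℝ) + (nbf J K 7 : ℝ) * (nbf L M 7 : ℝ) + (nbf L J 7 : ℝ) * (nbf K M 7 : ℝ) + (nbf K L 7 : ℝ) * (nbf J M 7 : ℝ))/4) * hs3R
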